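/- arXiv:2207.04888 — 4 statements merged into one kernel-verified Lean document; each statement's English description precedes it below -/
import Mathlib

section
/- Pointwise Morse-Bott property: Let g : ℝ^p × ℝ^d → ℝ be a parametric Morse-Bott function. Then for every x₀ ∈ ℝ^p, the function y ↦ g(x₀,y) is a Morse-Bott function: for every critical point y₀ of g(x₀,·) there exists an open neighborhood V of y₀ in ℝ^d such that {y ∈ ℝ^d : ∂_y g(x₀,y) = 0} ∩ V is a connected submanifold of ℝ^d of dimension dim(Ker(∂²_{yy} g(x₀,y₀))). -/
noncomputable section

open Set Filter Topology Metric RealInnerProductSpace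

abbrev Euc (n : ℕ) : Type := EuclideanSpace ℝ (Fin n)

variable {p d : ℕ}

/-- Gradient of `g` with respect to the second variable. -/
noncomputable def gradY (g : Euc p × Euc d → ℝ) (x : Euc p) (y : Euc d) : Euc d :=
  gradient (fun y' => g (x, y')) y

/-- Hessian `∂²_{yy} g` as a continuous linear map. -/
noncomputable def hessYY (g : Euc p × Euc d → ℝ) (x : Euc p) (y : Euc d) :
    Euc d →L[ℝ] Euc d :=
  fderiv ℝ (fun y' => gradY g x y') y

/-- Mixed Hessian `∂²_{xy} g` as a continuous linear map. -/
noncomputable def hessXY (g : Euc p × Euc d → ℝ) (x : Euc p) (y : Euc d) :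
    Euc p →L[ℝ] Euc d :=
  fderiv ℝ (fun x' => gradY g x' y) x

/-- Augmented critical set. -/
def augCrit (g : Euc p × Euc d → ℝ) : Set (Euc p × Euc d) :=
  {z | gradY g z.1 z.2 = 0}

/-- `S` is a `C²` embedded submanifold of dimension `k` of `E`. -/
def IsC2Submanifold {E : Type*} [NormedAddCommGroup E] [NormedSpace ℝ E]
    (k : ℕ) (S : Set E) : Prop :=
  ∀ z ∈ S, ∃ (W : Submodule ℝ E) (U V : Set E) (ψ ψinv : E → E),
    Module.finrank ℝ W = k ∧
    IsOpen U ∧ z ∈ U ∧ IsOpen V ∧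
    ContDiffOn ℝ 2 ψ U ∧ ContDiffOn ℝ 2 ψinv V ∧
    (∀ u ∈ U, ψinv (ψ u) = u) ∧ (∀ v ∈ V, ψ (ψinv v) = v) ∧
    ψ '' U = V ∧ ψ '' (U ∩ S) = V ∩ (W : Set E)

/-- Parametric Morse–Bott function. -/
def IsParamMorseBott (g : Euc p × Euc d → ℝ) : Prop :=
  ∀ z : Euc p × Euc d, gradY g z.1 z.2 = 0 →
    ∃ V : Set (Euc p × Euc d), IsOpen V ∧ z ∈ V ∧
      IsConnected (augCrit g ∩ V) ∧
      IsC2Submanifold (p + Module.finrank ℝ (LinearMap.ker (hessYY g z.1 z.2 : Euc d →ₗ[ℝ] Euc d)))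
        (augCrit g ∩ V)

/-- `g` is `L`-smooth in `y` for some `L > 0`: the `y`-gradient is `L`-Lipschitz in `y`. -/
def SmoothInY (g : Euc p × Euc d → ℝ) : Prop :=
  ∃ L : NNReal, 0 < L ∧ ∀ x, LipschitzWith L (fun y => gradY g x y)

/-- `g` is coercive in `y`: `g (x, y) → +∞` as `‖y‖ → +∞`. -/
def CoerciveInY (g : Euc p × Euc d → ℝ) : Prop :=
  ∀ x, Tendsto (fun y : Euc d => g (x, y)) (comap (fun y : Euc d => ‖y‖) atTop) atTop

/-- `φflow` is the gradient flow of `y ↦ g (x, y)` started at `y`. -/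
def IsGradFlow (g : Euc p × Euc d → ℝ) (φflow : ℝ → Euc p → Euc d → Euc d) : Prop :=
  (∀ x y, φflow 0 x y = y) ∧
  ∀ x y, ∀ t ∈ Ici (0:ℝ),
    HasDerivWithinAt (fun s => φflow s x y) (-(gradY g x (φflow t x y))) (Ici 0) t

/-- `φsel` is the selection obtained as the limit of the gradient flow `φflow`. -/
def IsFlowSelection (g : Euc p × Euc d → ℝ) (φflow : ℝ → Euc p → Euc d → Euc d)
    (φsel : Euc p → Euc d → Euc d) : Prop :=
  IsGradFlow g φflow ∧ ∀ x y, Tendsto (fun t => φflow t x y) atTop (𝓝 (φsel x y))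

/-- Moore–Penrose pseudo-inverse, characterized by the four Penrose conditions. -/
def IsMPInv {E : Type*} [NormedAddCommGroup E] [InnerProductSpace ℝ E] [CompleteSpace E]
    (A B : E →L[ℝ] E) : Prop :=
  A ∘L B ∘L A = A ∧ B ∘L A ∘L B = B ∧
  ContinuousLinearMap.adjoint (A ∘L B) = A ∘L B ∧
  ContinuousLinearMap.adjoint (B ∘L A) = B ∘L A



set_option maxHeartbeats 1000000 in
lemma gradY_eq (g : Euc p × Euc d → ℝ) (hg : ContDiff ℝ 2 g) (x : Euc p) (y : Euc d) :
    gradY g x y = (InnerProductSpace.toDual ℝ (Euc d)).symm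
      ((fderiv ℝ g (x, y)).comp (ContinuousLinearMap.inr ℝ (Euc p) (Euc d))) := by
  have hdg : DifferentiableAt ℝ g (x, y) :=
    (hg.differentiable (by norm_num)).differentiableAt
  have hcomp : HasFDerivAt (fun y' => g (x, y'))
      ((fderiv ℝ g (x, y)).comp (ContinuousLinearMap.inr ℝ (Euc p) (Euc d))) y :=
    hdg.hasFDerivAt.comp y (hasFDerivAt_prodMk_right x y)
  rw [gradY, gradient, hcomp.fderiv]

lemma contDiff_gradY (g : Euc p × Euc d → ℝ) (hg : ContDiff ℝ 2 g) :
    ContDiff ℝ 1 (fun z : Euc p × Euc d => gradY g z.1 z.2) := by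
  have : (fun z : Euc p × Euc d => gradY g z.1 z.2) = fun z =>
      (InnerProductSpace.toDual ℝ (Euc d)).symm
        ((fderiv ℝ g z).comp (ContinuousLinearMap.inr ℝ (Euc p) (Euc d))) := by
    funext z
    exact gradY_eq g hg z.1 z.2
  rw [this]
  have h1 : ContDiff ℝ 1 (fun z : Euc p × Euc d => fderiv ℝ g z) :=
    hg.fderiv_right (by norm_num)
  have h2 : ContDiff ℝ 1 (fun z : Euc p × Euc d =>
      (fderiv ℝ g z).comp (ContinuousLinearMap.inr ℝ (Euc p) (Euc d))) :=
    h1.clm_comp contDiff_const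
  exact ((InnerProductSpace.toDual ℝ (Euc d)).symm.toContinuousLinearEquiv :
    _ ≃L[ℝ] _).toContinuousLinearMap.contDiff.comp h2

lemma hessYY_eq (g : Euc p × Euc d → ℝ) (hg : ContDiff ℝ 2 g) (x : Euc p) (y : Euc d) :
    hessYY g x y = (fderiv ℝ (fun z : Euc p × Euc d => gradY g z.1 z.2) (x, y)).comp
      (ContinuousLinearMap.inr ℝ (Euc p) (Euc d)) := by
  have hF : DifferentiableAt ℝ (fun z : Euc p × Euc d => gradY g z.1 z.2) (x, y) :=
    ((contDiff_gradY g hg).differentiable one_ne_zero).differentiableAt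
  have : HasFDerivAt (fun y' => gradY g x y')
      ((fderiv ℝ (fun z : Euc p × Euc d => gradY g z.1 z.2) (x, y)).comp
        (ContinuousLinearMap.inr ℝ (Euc p) (Euc d))) y :=
    hF.hasFDerivAt.comp y (hasFDerivAt_prodMk_right x y)
  rw [hessYY, this.fderiv]


set_option maxHeartbeats 1000000 in
/-- Pointwise Morse-Bott property. -/
theorem pointwise_morse_bott
    {p d : ℕ} (g : Euc p × Euc d → ℝ)
    (hg : ContDiff ℝ 2 g) (hmb : IsParamMorseBott g)
    (x₀ : Euc p) (y₀ : Euc d) (hcrit : gradY g x₀ y₀ = 0) :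
    ∃ V : Set (Euc d), IsOpen V ∧ y₀ ∈ V ∧
      IsConnected ({y | gradY g x₀ y = 0} ∩ V) ∧
      IsC2Submanifold (Module.finrank ℝ (LinearMap.ker (hessYY g x₀ y₀ : Euc d →ₗ[ℝ] Euc d)))
        ({y | gradY g x₀ y = 0} ∩ V) := by
  classical
  set z₀ : Euc p × Euc d := (x₀, y₀) with hz₀
  obtain ⟨Vmb, hVmbOpen, hz₀Vmb, _hconn, hsub⟩ := hmb z₀ hcrit
  have hz₀S : z₀ ∈ augCrit g ∩ Vmb := ⟨hcrit, hz₀Vmb⟩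
  obtain ⟨W, U, V', ψ, ψinv, hWrank, hUopen, hz₀U, hV'open, hψ, hψinv, hlinv, hrinv,
    himg, himgS⟩ := hsub z₀ hz₀S
  -- basic chart facts
  have hmemV' : ∀ u ∈ U, ψ u ∈ V' := fun u hu => himg ▸ mem_image_of_mem ψ hu
  have key1 : ∀ u ∈ U, (ψ u ∈ W ↔ u ∈ augCrit g ∩ Vmb) := by
    intro u hu
    constructor
    · intro hW
      have : ψ u ∈ V' ∩ (W : Set _) := ⟨hmemV' u hu, hW⟩
      rw [← himgS] at this
      obtain ⟨u', hu', hequ⟩ := this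
      have : u' = u := by
        have h1 := hlinv u' hu'.1
        have h2 := hlinv u hu
        rw [hequ] at h1; rw [h1] at h2; exact h2
      exact this ▸ hu'.2
    · intro hS
      have : ψ u ∈ ψ '' (U ∩ (augCrit g ∩ Vmb)) := mem_image_of_mem ψ ⟨hu, hS⟩
      rw [himgS] at this
      exact this.2
  -- derivatives of the chart
  set w₀ : Euc p × Euc d := ψ z₀ with hw₀
  have hw₀V' : w₀ ∈ V' := hmemV' z₀ hz₀U
  have hw₀W : w₀ ∈ W := (key1 z₀ hz₀U).mpr hz₀S
  have hψat : ContDiffAt ℝ 2 ψ z₀ := hψ.contDiffAt (hUopen.mem_nhds hz₀U)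
  have hψinvat : ContDiffAt ℝ 2 ψinv w₀ := hψinv.contDiffAt (hV'open.mem_nhds hw₀V')
  have hψdiff : DifferentiableAt ℝ ψ z₀ := hψat.differentiableAt two_ne_zero
  have hψinvdiff : DifferentiableAt ℝ ψinv w₀ := hψinvat.differentiableAt two_ne_zero
  set Dψ : (Euc p × Euc d) →L[ℝ] (Euc p × Euc d) := fderiv ℝ ψ z₀ with hDψ
  set Dψi : (Euc p × Euc d) →L[ℝ] (Euc p × Euc d) := fderiv ℝ ψinv w₀ with hDψi
  have hinvz : ψinv w₀ = z₀ := hlinv z₀ hz₀U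
  have hinv1 : Dψi.comp Dψ = ContinuousLinearMap.id ℝ _ := by
    have hev : (fun z => ψinv (ψ z)) =ᶠ[𝓝 z₀] (fun z => z) :=
      Filter.eventually_of_mem (hUopen.mem_nhds hz₀U) hlinv
    have h1 : fderiv ℝ (fun z => ψinv (ψ z)) z₀ = fderiv ℝ (fun z => z) z₀ := hev.fderiv_eq
    have h2 : fderiv ℝ (ψinv ∘ ψ) z₀ = Dψi.comp Dψ := fderiv_comp z₀ hψinvdiff hψdiff
    rw [show (fun z => ψinv (ψ z)) = ψinv ∘ ψ from rfl] at h1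
    rw [← h2, h1, fderiv_id']
  -- the flatness of the gradient field along W
  set F : Euc p × Euc d → Euc d := fun z => gradY g z.1 z.2 with hFdef
  have hF1 : ContDiff ℝ 1 F := contDiff_gradY g hg
  have hF0 : ∀ w, w ∈ V' → w ∈ W → F (ψinv w) = 0 := by
    intro w hwV hwW
    have : w ∈ ψ '' U := himg ▸ hwV
    obtain ⟨u, hu, rfl⟩ := this
    rw [hlinv u hu]
    exact ((key1 u hu).mp hwW).1
  have hCeq : ∀ v : Euc d, hessYY g x₀ y₀ v
      = fderiv ℝ F z₀ (0, v) := by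
    intro v
    rw [hessYY_eq g hg x₀ y₀]
    rfl
  have hker : ∀ v : Euc d, Dψ (0, v) ∈ W → hessYY g x₀ y₀ v = 0 := by
    intro v hvW
    set w : Euc p × Euc d := Dψ (0, v) with hwdef
    have hc : HasDerivAt (fun t : ℝ => w₀ + t • w) w 0 := by
      simpa using ((hasDerivAt_id (0:ℝ)).smul_const w).const_add w₀
    have hc0 : (fun t : ℝ => w₀ + t • w) 0 = w₀ := by simp
    have hFz : DifferentiableAt ℝ F z₀ := (hF1.differentiable one_ne_zero).differentiableAt
    have hh : HasDerivAt (fun t : ℝ => F (ψinv (w₀ + t • w)))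
        (fderiv ℝ F z₀ (Dψi w)) 0 := by
      have h1 : HasDerivAt (fun t : ℝ => ψinv (w₀ + t • w)) (Dψi w) 0 := by
        have hdi : HasFDerivAt ψinv Dψi ((fun t : ℝ => w₀ + t • w) 0) := by
          simpa using hψinvdiff.hasFDerivAt
        exact hdi.comp_hasDerivAt 0 hc
      have hF' : HasFDerivAt F (fderiv ℝ F z₀) ((fun t : ℝ => ψinv (w₀ + t • w)) 0) := by
        simpa [hinvz] using hFz.hasFDerivAt
      exact hF'.comp_hasDerivAt 0 h1
    have hzero : (fun t : ℝ => F (ψinv (w₀ + t • w))) =ᶠ[𝓝 (0:ℝ)] fun _ => 0 := by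
      have hcont : ContinuousAt (fun t : ℝ => w₀ + t • w) 0 := hc.continuousAt
      have hV : ∀ᶠ t in 𝓝 (0:ℝ), w₀ + t • w ∈ V' := by
        have := hcont.preimage_mem_nhds (hV'open.mem_nhds (by simpa [hc0] using hw₀V'))
        exact this
      filter_upwards [hV] with t htV
      exact hF0 _ htV (W.add_mem hw₀W (W.smul_mem t hvW))
    have hh0 : HasDerivAt (fun t : ℝ => F (ψinv (w₀ + t • w))) 0 0 :=
      (hasDerivAt_const (0:ℝ) (0 : Euc d)).congr_of_eventuallyEq hzero
    have huniq : fderiv ℝ F z₀ (Dψi w) = 0 := hh.unique hh0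
    have hDiw : Dψi w = (0, v) := by
      have := congrArg (fun (L : (Euc p × Euc d) →L[ℝ] (Euc p × Euc d)) => L (0, v)) hinv1
      simpa [hwdef] using this
    rw [hCeq v, ← hDiw]
    exact huniq
  -- linear algebra setup
  set K : Submodule ℝ (Euc d) := LinearMap.ker (hessYY g x₀ y₀ : Euc d →ₗ[ℝ] Euc d) with hKdef
  set k : ℕ := Module.finrank ℝ K with hk
  obtain ⟨Kc, hKc⟩ := Submodule.exists_isCompl K
  obtain ⟨Wc, hWc⟩ := Submodule.exists_isCompl W
  have hEfr : Module.finrank ℝ (Euc p × Euc d) = p + d := by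
    simp [Module.finrank_prod]
  have hdfr : Module.finrank ℝ (Euc d) = d := finrank_euclideanSpace_fin
  have hWWc : Module.finrank ℝ W + Module.finrank ℝ Wc = p + d := by
    have h := Submodule.finrank_add_eq_of_isCompl hWc
    rw [hEfr] at h; exact h
  have hKKc : Module.finrank ℝ K + Module.finrank ℝ Kc = d := by
    have h := Submodule.finrank_add_eq_of_isCompl hKc
    rw [hdfr] at h; exact h
  have hfrEq : Module.finrank ℝ Wc = Module.finrank ℝ Kc := by
    rw [hWrank] at hWWc
    omega
  set e : Wc ≃ₗ[ℝ] Kc := LinearEquiv.ofFinrankEq _ _ hfrEq with hedef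
  set σ : (Euc p × Euc d) →ₗ[ℝ] Euc d :=
    Kc.subtype ∘ₗ (e : Wc →ₗ[ℝ] Kc) ∘ₗ (Wc.linearProjOfIsCompl W hWc.symm) with hσdef
  have hσ0 : ∀ z, σ z = 0 ↔ z ∈ W := by
    intro z
    simp only [hσdef, LinearMap.coe_comp, Function.comp_apply, Submodule.coe_subtype,
      LinearEquiv.coe_coe, Submodule.coe_eq_zero, map_eq_zero_iff _ e.injective]
    exact Submodule.linearProjOfIsCompl_apply_eq_zero_iff hWc.symm
  have hσKc : ∀ z, σ z ∈ Kc := fun z => by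
    simp only [hσdef, LinearMap.coe_comp, Function.comp_apply, Submodule.coe_subtype]
    exact Submodule.coe_mem _
  set pK : Euc d →ₗ[ℝ] Euc d := K.subtype ∘ₗ (K.linearProjOfIsCompl Kc hKc) with hpKdef
  have hpKmem : ∀ v, pK v ∈ K := fun v => by
    simp only [hpKdef, LinearMap.coe_comp, Function.comp_apply, Submodule.coe_subtype]
    exact Submodule.coe_mem _
  have hpKid : ∀ v ∈ K, pK v = v := by
    intro v hv
    simp only [hpKdef, LinearMap.coe_comp, Function.comp_apply, Submodule.coe_subtype]
    rw [show v = ((⟨v, hv⟩ : K) : Euc d) from rfl]; exact congrArg Subtype.val (Submodule.linearProjOfIsCompl_apply_left hKc ⟨v, hv⟩)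
  set σc : (Euc p × Euc d) →L[ℝ] Euc d := LinearMap.toContinuousLinearMap σ with hσcdef
  set pKc : Euc d →L[ℝ] Euc d := LinearMap.toContinuousLinearMap pK with hpKcdef
  have hσcapp : ∀ z, σc z = σ z := fun z => rfl
  have hpKcapp : ∀ v, pKc v = pK v := fun v => rfl
  -- the chart map
  set χ : Euc d → Euc d := fun y => pKc (y - y₀) + σc (ψ (x₀, y)) with hχdef
  set U₀ : Set (Euc d) := {y | (x₀, y) ∈ U ∩ Vmb} with hU₀def
  have hU₀open : IsOpen U₀ := by
    have : Continuous (fun y : Euc d => (x₀, y)) := Continuous.prodMk_right x₀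
    exact (hUopen.inter hVmbOpen).preimage this
  have hy₀U₀ : y₀ ∈ U₀ := ⟨hz₀U, hz₀Vmb⟩
  have hcritW : ∀ y ∈ U₀, (gradY g x₀ y = 0 ↔ ψ (x₀, y) ∈ W) := by
    intro y hy
    rw [key1 (x₀, y) hy.1]
    constructor
    · intro h; exact ⟨h, hy.2⟩
    · intro h; exact h.1
  have hχK : ∀ y ∈ U₀, (χ y ∈ K ↔ gradY g x₀ y = 0) := by
    intro y hy
    have hmem : pKc (y - y₀) ∈ K := by rw [hpKcapp]; exact hpKmem _
    have hiff : χ y ∈ K ↔ σc (ψ (x₀, y)) ∈ K := by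
      rw [show χ y = pKc (y - y₀) + σc (ψ (x₀, y)) from rfl]
      exact Submodule.add_mem_iff_right _ hmem
    rw [hiff]
    constructor
    · intro h
      have h0 : σc (ψ (x₀, y)) = 0 :=
        Submodule.disjoint_def.mp hKc.disjoint _ h (by rw [hσcapp]; exact hσKc _)
      rw [hσcapp, hσ0] at h0
      exact (hcritW y hy).mpr h0
    · intro h
      have : ψ (x₀, y) ∈ W := (hcritW y hy).mp h
      rw [hσcapp, (hσ0 _).mpr this]
      exact K.zero_mem
  -- smoothness of χ
  have hUψopen : IsOpen {y : Euc d | (x₀, y) ∈ U} :=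
    hUopen.preimage (Continuous.prodMk_right x₀)
  have hχsmooth : ContDiffOn ℝ 2 χ {y : Euc d | (x₀, y) ∈ U} := by
    apply ContDiffOn.add
    · exact (pKc.contDiff.comp (contDiff_id.sub contDiff_const)).contDiffOn
    · exact (σc.contDiff.comp_contDiffOn
        (hψ.comp ((contDiff_const.prodMk contDiff_id).contDiffOn) (fun y hy => hy)))
  have hχat : ContDiffAt ℝ 2 χ y₀ :=
    hχsmooth.contDiffAt (hUψopen.mem_nhds hz₀U)
  -- derivative of χ at y₀
  set Dχ : Euc d →L[ℝ] Euc d :=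
    pKc + σc.comp (Dψ.comp (ContinuousLinearMap.inr ℝ (Euc p) (Euc d))) with hDχdef
  have hDχ : HasFDerivAt χ Dχ y₀ := by
    have h1 : HasFDerivAt (fun y : Euc d => pKc (y - y₀)) pKc y₀ := by
      have := pKc.hasFDerivAt.comp y₀ ((hasFDerivAt_id y₀).sub_const y₀)
      simp only [Function.comp_def, ContinuousLinearMap.comp_id] at this; exact this
    have h2 : HasFDerivAt (fun y : Euc d => σc (ψ (x₀, y)))
        (σc.comp (Dψ.comp (ContinuousLinearMap.inr ℝ (Euc p) (Euc d)))) y₀ := by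
      have hψd : HasFDerivAt ψ Dψ z₀ := hψdiff.hasFDerivAt
      have := σc.hasFDerivAt.comp y₀ (hψd.comp y₀ (hasFDerivAt_prodMk_right x₀ y₀))
      exact this
    exact h1.add h2
  have hDχinj : Function.Injective Dχ := by
    rw [injective_iff_map_eq_zero]
    intro v hv
    have hv' : pK v + σ (Dψ (0, v)) = 0 := by
      have : Dχ v = pKc v + σc (Dψ (ContinuousLinearMap.inr ℝ (Euc p) (Euc d) v)) := rfl
      rw [this] at hv
      simpa [hσcapp, hpKcapp] using hv
    have hb : σ (Dψ (0, v)) = 0 := by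
      have h1 : pK v = -σ (Dψ (0, v)) := by linear_combination (norm := module) hv'
      have h2 : σ (Dψ (0, v)) ∈ K := by
        rw [← neg_mem_iff, ← h1]; exact hpKmem v
      exact Submodule.disjoint_def.mp hKc.disjoint _ h2 (hσKc _)
    have hWmem : Dψ (0, v) ∈ W := (hσ0 _).mp hb
    have hvK : v ∈ K := LinearMap.mem_ker.mpr (hker v hWmem)
    have : pK v = 0 := by rw [hb, add_zero] at hv'; exact hv'
    rw [hpKid v hvK] at this
    exact this
  have hDχbij : Function.Bijective Dχ :=
    ⟨hDχinj, (LinearMap.injective_iff_surjective (f := (Dχ : Euc d →ₗ[ℝ] Euc d))).mp hDχinj⟩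
  set eDχ : Euc d ≃L[ℝ] Euc d :=
    LinearEquiv.toContinuousLinearEquiv (LinearEquiv.ofBijective
      (Dχ : Euc d →ₗ[ℝ] Euc d) hDχbij) with heDχ
  have heDχcoe : (eDχ : Euc d →L[ℝ] Euc d) = Dχ := by
    ext v; rfl
  have hDχ' : HasFDerivAt χ (eDχ : Euc d →L[ℝ] Euc d) y₀ := by rw [heDχcoe]; exact hDχ
  -- inverse function theorem
  set Φ : OpenPartialHomeomorph (Euc d) (Euc d) :=
    hχat.toOpenPartialHomeomorph χ hDχ' two_ne_zero with hΦdef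
  have hΦcoe : (Φ : Euc d → Euc d) = χ := rfl
  have hy₀src : y₀ ∈ Φ.source := hχat.mem_toOpenPartialHomeomorph_source hDχ' two_ne_zero
  have hχy₀ : χ y₀ = 0 := by
    rw [hχdef]
    simp only [sub_self, map_zero, zero_add]
    rw [hσcapp, (hσ0 _).mpr hw₀W]
  have h0tgt : (0 : Euc d) ∈ Φ.target := by
    have := hχat.image_mem_toOpenPartialHomeomorph_target hDχ' two_ne_zero
    rwa [hχy₀] at this
  have hsymm0 : Φ.symm 0 = y₀ := by
    rw [← hχy₀, ← hΦcoe]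
    exact Φ.left_inv hy₀src
  have hsymmCD : ContDiffAt ℝ 2 Φ.symm 0 := by
    have := hχat.to_localInverse (f' := eDχ) hDχ' two_ne_zero
    rw [hχy₀] at this
    exact this
  obtain ⟨t, ht0, htCD⟩ := hsymmCD.contDiffOn le_rfl (by simp)
  -- choose a small ball
  have hΩopen : IsOpen (Φ.target ∩ Φ.symm ⁻¹' (U₀ ∩ Φ.source)) :=
    Φ.isOpen_inter_preimage_symm (hU₀open.inter Φ.open_source)
  have h0Ω : (0 : Euc d) ∈ Φ.target ∩ Φ.symm ⁻¹' (U₀ ∩ Φ.source) := by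
    refine ⟨h0tgt, ?_⟩
    rw [mem_preimage, hsymm0]
    exact ⟨hy₀U₀, hy₀src⟩
  have hnhds : (Φ.target ∩ Φ.symm ⁻¹' (U₀ ∩ Φ.source)) ∩ interior t ∈ 𝓝 (0 : Euc d) := by
    refine Filter.inter_mem (hΩopen.mem_nhds h0Ω) ?_
    exact interior_mem_nhds.mpr ht0
  obtain ⟨ε, hε, hball⟩ := Metric.mem_nhds_iff.mp hnhds
  set B : Set (Euc d) := Metric.ball (0 : Euc d) ε with hBdef
  have hBsub : B ⊆ (Φ.target ∩ Φ.symm ⁻¹' (U₀ ∩ Φ.source)) ∩ interior t := hball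
  have hBtgt : B ⊆ Φ.target := fun w hw => (hBsub hw).1.1
  have hBt : B ⊆ t := fun w hw => interior_subset (hBsub hw).2
  have hBsymm : ∀ w ∈ B, Φ.symm w ∈ U₀ ∩ Φ.source := fun w hw => (hBsub hw).1.2
  set Ufin : Set (Euc d) := Φ.source ∩ χ ⁻¹' B with hUfin
  have hUfinOpen : IsOpen Ufin := by
    have := Φ.isOpen_inter_preimage (s := B) isOpen_ball
    rwa [hΦcoe] at this
  have h0B : (0 : Euc d) ∈ B := Metric.mem_ball_self hε
  have hy₀Ufin : y₀ ∈ Ufin := ⟨hy₀src, by rw [mem_preimage, hχy₀]; exact h0B⟩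
  have hUfinU₀ : Ufin ⊆ U₀ := by
    intro y hy
    have h1 : Φ.symm (χ y) ∈ U₀ ∩ Φ.source := hBsymm _ hy.2
    have h2 : Φ.symm (χ y) = y := by
      rw [← hΦcoe]; exact Φ.left_inv hy.1
    rw [h2] at h1
    exact h1.1
  have hχUfin : ∀ y ∈ Ufin, χ y ∈ B := fun y hy => hy.2
  -- characterize the critical set inside Ufin
  have hScrit : ∀ y ∈ Ufin, (gradY g x₀ y = 0 ↔ χ y ∈ K) :=
    fun y hy => (hχK y (hUfinU₀ hy)).symm
  set S : Set (Euc d) := {y | gradY g x₀ y = 0} ∩ Ufin with hSdef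
  have himgSB : χ '' S = B ∩ (K : Set (Euc d)) := by
    apply Subset.antisymm
    · rintro _ ⟨y, ⟨hyc, hyU⟩, rfl⟩
      exact ⟨hχUfin y hyU, (hScrit y hyU).mp hyc⟩
    · rintro w ⟨hwB, hwK⟩
      have hys : Φ.symm w ∈ Φ.source := Φ.map_target (hBtgt hwB)
      have hχw : χ (Φ.symm w) = w := by rw [← hΦcoe]; exact Φ.right_inv (hBtgt hwB)
      have hyUfin : Φ.symm w ∈ Ufin := ⟨hys, by rw [mem_preimage, hχw]; exact hwB⟩
      refine ⟨Φ.symm w, ⟨?_, hyUfin⟩, hχw⟩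
      exact (hScrit _ hyUfin).mpr (by rw [hχw]; exact hwK)
  have hSimg : S = Φ.symm '' (B ∩ (K : Set (Euc d))) := by
    rw [← himgSB]
    apply Subset.antisymm
    · intro y hy
      refine ⟨χ y, mem_image_of_mem χ hy, ?_⟩
      rw [← hΦcoe]; exact Φ.left_inv hy.2.1
    · rintro _ ⟨_, ⟨y, hy, rfl⟩, rfl⟩
      have : Φ.symm (χ y) = y := by rw [← hΦcoe]; exact Φ.left_inv hy.2.1
      rwa [this]
  refine ⟨Ufin, hUfinOpen, hy₀Ufin, ?_, ?_⟩
  · -- connectedness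
    rw [show {y | gradY g x₀ y = 0} ∩ Ufin = S from rfl, hSimg]
    have hconv : Convex ℝ (B ∩ (K : Set (Euc d))) :=
      (convex_ball 0 ε).inter K.convex
    have hne : (B ∩ (K : Set (Euc d))).Nonempty := ⟨0, h0B, K.zero_mem⟩
    have hconn : IsConnected (B ∩ (K : Set (Euc d))) := hconv.isConnected hne
    exact hconn.image _ (Φ.symm.continuousOn.mono (fun w hw => hBtgt hw.1))
  · -- submanifold structure
    intro z hz
    refine ⟨K, Ufin, B, χ, Φ.symm, rfl, hUfinOpen, hz.2, isOpen_ball, ?_, ?_, ?_, ?_, ?_, ?_⟩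
    · exact hχsmooth.mono (fun y hy => (hUfinU₀ hy).1)
    · exact htCD.mono hBt
    · intro u hu
      rw [← hΦcoe]; exact Φ.left_inv hu.1
    · intro v hv
      rw [← hΦcoe]; exact Φ.right_inv (hBtgt hv)
    · apply Subset.antisymm
      · rintro _ ⟨y, hy, rfl⟩; exact hχUfin y hy
      · rintro w hw
        have hys : Φ.symm w ∈ Φ.source := Φ.map_target (hBtgt hw)
        have hχw : χ (Φ.symm w) = w := by rw [← hΦcoe]; exact Φ.right_inv (hBtgt hw)
        exact ⟨Φ.symm w, ⟨hys, by rw [mem_preimage, hχw]; exact hw⟩, hχw⟩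
    · have heq : Ufin ∩ ({y | gradY g x₀ y = 0} ∩ Ufin) = S :=
        Set.inter_eq_self_of_subset_right (fun y hy => hy.2)
      rw [heq]
      exact himgSB

end
end

section
/- Composition with parameterized diffeomorphisms preserves the parametric Morse-Bott property: Let h : ℝ^d → ℝ be a smooth Morse-Bott function, and let T : ℝ^p × ℝ^d → ℝ^d be a smooth map such that for every x ∈ ℝ^p the map τ_x : y ↦ T(x,y) is a diffeomorphism of ℝ^d. Then the function g(x,y) := h(τ_x(y)) is a parametric Morse-Bott function. -/
noncomputable section

open Set Filter Topology Metric RealInnerProductSpace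

variable {p d : ℕ}

/-- Gradient of a function of one (vector) variable. -/
noncomputable def grad1 {d : ℕ} (h : Euc d → ℝ) (y : Euc d) : Euc d := gradient h y

/-- Hessian of a function of one (vector) variable. -/
noncomputable def hess1 {d : ℕ} (h : Euc d → ℝ) (y : Euc d) : Euc d →L[ℝ] Euc d :=
  fderiv ℝ (fun y' => grad1 h y') y

/-- `h` is a Morse–Bott function. -/
def IsMorseBott {d : ℕ} (h : Euc d → ℝ) : Prop :=
  ∀ y₀ : Euc d, grad1 h y₀ = 0 →
    ∃ V : Set (Euc d), IsOpen V ∧ y₀ ∈ V ∧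
      IsConnected ({y | grad1 h y = 0} ∩ V) ∧
      IsC2Submanifold (Module.finrank ℝ (LinearMap.ker (hess1 h y₀ : Euc d →ₗ[ℝ] Euc d)))
        ({y | grad1 h y = 0} ∩ V)


namespace MBAux
open ContinuousLinearMap InnerProductSpace Module

lemma hone : ((⊤:ℕ∞) : WithTop ℕ∞) ≠ 0 := by simp

lemma htwo : (2 : WithTop ℕ∞) ≤ ((⊤:ℕ∞) : WithTop ℕ∞) := by
  have : ((2:ℕ∞) : WithTop ℕ∞) ≤ ((⊤:ℕ∞) : WithTop ℕ∞) := by exact_mod_cast le_top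
  simpa using this

lemma contDiff_gradient {d : ℕ} {h : Euc d → ℝ} (hh : ContDiff ℝ (⊤:ℕ∞) h) :
    ContDiff ℝ (⊤:ℕ∞) (fun y => gradient h y) := by
  have h1 : ContDiff ℝ (⊤:ℕ∞) (fun y => fderiv ℝ h y) :=
    hh.fderiv_right (by exact_mod_cast le_top)
  exact (LinearIsometryEquiv.contDiff (InnerProductSpace.toDual ℝ (Euc d)).symm).comp h1

lemma toDual_adjoint {m n : ℕ} (A : Euc n →L[ℝ] Euc m) (w : Euc m) :
    InnerProductSpace.toDual ℝ (Euc n) (ContinuousLinearMap.adjoint A w)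
      = ((InnerProductSpace.toDual ℝ (Euc m) w).comp A : Euc n →L[ℝ] ℝ) := by
  apply ContinuousLinearMap.ext
  intro v
  simp only [InnerProductSpace.toDual_apply_apply, ContinuousLinearMap.coe_comp', Function.comp_apply]
  exact ContinuousLinearMap.adjoint_inner_left A v w

lemma gradient_comp {m n : ℕ} {f : Euc m → ℝ} {τ : Euc n → Euc m} {y : Euc n}
    (hf : DifferentiableAt ℝ f (τ y)) (hτ : DifferentiableAt ℝ τ y) :
    gradient (fun z => f (τ z)) y
      = ContinuousLinearMap.adjoint (fderiv ℝ τ y) (gradient f (τ y)) := by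
  have hg : HasFDerivAt f (InnerProductSpace.toDual ℝ (Euc m) (gradient f (τ y))) (τ y) :=
    hasGradientAt_iff_hasFDerivAt.mp hf.hasGradientAt
  have hc : HasFDerivAt (fun z => f (τ z))
      ((InnerProductSpace.toDual ℝ (Euc m) (gradient f (τ y))).comp (fderiv ℝ τ y)) y :=
    hg.comp y hτ.hasFDerivAt
  have : HasGradientAt (fun z => f (τ z))
      (ContinuousLinearMap.adjoint (fderiv ℝ τ y) (gradient f (τ y))) y := by
    rw [HasGradientAt, HasGradientAtFilter, toDual_adjoint]
    exact hc
  exact this.gradient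

lemma fderiv_gradient_comp {d : ℕ} {h : Euc d → ℝ} (hh : ContDiff ℝ (⊤:ℕ∞) h)
    {τ : Euc d → Euc d} (hτ : ContDiff ℝ (⊤:ℕ∞) τ) (y₀ : Euc d)
    (hw : gradient h (τ y₀) = 0) :
    fderiv ℝ (fun y => gradient (fun z => h (τ z)) y) y₀
      = (ContinuousLinearMap.adjoint (fderiv ℝ τ y₀)) ∘L
        ((fderiv ℝ (fun w => gradient h w) (τ y₀)) ∘L (fderiv ℝ τ y₀)) := by
  have hB : ContDiff ℝ (⊤:ℕ∞) (fun y => ContinuousLinearMap.adjoint (fderiv ℝ τ y)) :=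
    (LinearIsometryEquiv.contDiff
      (ContinuousLinearMap.adjoint : (Euc d →L[ℝ] Euc d) ≃ₗᵢ⋆[ℝ] (Euc d →L[ℝ] Euc d))).comp
      (hτ.fderiv_right (by exact_mod_cast le_top))
  set B' := fderiv ℝ (fun y => ContinuousLinearMap.adjoint (fderiv ℝ τ y)) y₀ with hB'
  have hBd : HasFDerivAt (fun y => ContinuousLinearMap.adjoint (fderiv ℝ τ y)) B' y₀ :=
    (hB.differentiable hone y₀).hasFDerivAt
  have hgC := contDiff_gradient hh
  have hgd : HasFDerivAt (fun w => gradient h w)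
      (fderiv ℝ (fun w => gradient h w) (τ y₀)) (τ y₀) :=
    (hgC.differentiable hone _).hasFDerivAt
  have hτd : HasFDerivAt τ (fderiv ℝ τ y₀) y₀ := (hτ.differentiable hone y₀).hasFDerivAt
  have hc : HasFDerivAt (fun y => gradient h (τ y))
      ((fderiv ℝ (fun w => gradient h w) (τ y₀)) ∘L (fderiv ℝ τ y₀)) y₀ := hgd.comp y₀ hτd
  have happ := hBd.clm_apply hc
  rw [hw] at happ
  have hflip : B'.flip (0 : Euc d) = 0 := by
    apply ContinuousLinearMap.ext; intro v; simp
  rw [hflip, add_zero] at happ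
  have hfun : (fun y => gradient (fun z => h (τ z)) y)
      = fun y => ContinuousLinearMap.adjoint (fderiv ℝ τ y) (gradient h (τ y)) :=
    funext fun y => gradient_comp (hh.differentiable hone _) (hτ.differentiable hone _)
  rw [hfun]
  exact happ.fderiv

lemma finrank_prod_top {p d : ℕ} (W' : Submodule ℝ (Euc d)) :
    finrank ℝ (Submodule.prod (⊤ : Submodule ℝ (Euc p)) W' : Submodule ℝ (Euc p × Euc d))
      = p + finrank ℝ W' := by
  let e : (Submodule.prod (⊤ : Submodule ℝ (Euc p)) W' : Submodule ℝ (Euc p × Euc d))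
      ≃ₗ[ℝ] Euc p × W' :=
    { toFun := fun v => ((v : Euc p × Euc d).1, ⟨(v : Euc p × Euc d).2, v.2.2⟩)
      invFun := fun w => ⟨(w.1, (w.2 : Euc d)), ⟨trivial, w.2.2⟩⟩
      map_add' := fun a b => rfl
      map_smul' := fun c a => rfl
      left_inv := fun a => rfl
      right_inv := fun a => rfl }
  rw [e.finrank_eq, Module.finrank_prod, finrank_euclideanSpace_fin]

lemma adjoint_inv_comp {d : ℕ} (e : Euc d ≃L[ℝ] Euc d) :
    (ContinuousLinearMap.adjoint (e.symm : Euc d →L[ℝ] Euc d)) ∘L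
      (ContinuousLinearMap.adjoint (e : Euc d →L[ℝ] Euc d))
      = ContinuousLinearMap.id ℝ (Euc d) := by
  rw [← ContinuousLinearMap.adjoint_comp]
  rw [e.coe_comp_coe_symm]
  exact ContinuousLinearMap.adjoint_id

lemma adjoint_equiv_injective {d : ℕ} (e : Euc d ≃L[ℝ] Euc d) :
    Function.Injective (ContinuousLinearMap.adjoint (e : Euc d →L[ℝ] Euc d)) := by
  intro a b hab
  have h := congrArg (ContinuousLinearMap.adjoint (e.symm : Euc d →L[ℝ] Euc d)) hab
  have h2 := adjoint_inv_comp e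
  calc a = ((ContinuousLinearMap.adjoint (e.symm : Euc d →L[ℝ] Euc d)) ∘L
      (ContinuousLinearMap.adjoint (e : Euc d →L[ℝ] Euc d))) a := by rw [h2]; rfl
  _ = ((ContinuousLinearMap.adjoint (e.symm : Euc d →L[ℝ] Euc d)) ∘L
      (ContinuousLinearMap.adjoint (e : Euc d →L[ℝ] Euc d))) b := by
      simpa using h
  _ = b := by rw [h2]; rfl

lemma finrank_ker_conj {d : ℕ} (H : Euc d →L[ℝ] Euc d) (e : Euc d ≃L[ℝ] Euc d) :
    finrank ℝ (LinearMap.ker (((ContinuousLinearMap.adjoint (e : Euc d →L[ℝ] Euc d)) ∘L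
        (H ∘L (e : Euc d →L[ℝ] Euc d))) : Euc d →ₗ[ℝ] Euc d))
      = finrank ℝ (LinearMap.ker (H : Euc d →ₗ[ℝ] Euc d)) := by
  have hker : LinearMap.ker (((ContinuousLinearMap.adjoint (e : Euc d →L[ℝ] Euc d)) ∘L
        (H ∘L (e : Euc d →L[ℝ] Euc d))) : Euc d →ₗ[ℝ] Euc d)
      = (LinearMap.ker (H : Euc d →ₗ[ℝ] Euc d)).comap (e.toLinearEquiv : Euc d →ₗ[ℝ] Euc d) := by
    ext v
    simp only [LinearMap.mem_ker, Submodule.mem_comap]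
    constructor
    · intro hv
      have : ContinuousLinearMap.adjoint (e : Euc d →L[ℝ] Euc d) (H (e v)) = 0 := hv
      have h0 : ContinuousLinearMap.adjoint (e : Euc d →L[ℝ] Euc d) (0 : Euc d) = 0 := map_zero _
      exact adjoint_equiv_injective e (this.trans h0.symm)
    · intro hv
      show ContinuousLinearMap.adjoint (e : Euc d →L[ℝ] Euc d) (H (e v)) = 0
      have : H (e v) = 0 := hv
      rw [this, map_zero]
  rw [hker, Submodule.comap_equiv_eq_map_symm, LinearEquiv.finrank_map_eq]

lemma fderiv_equiv {d : ℕ} {τ σ : Euc d → Euc d}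
    (hτ : ContDiff ℝ (⊤:ℕ∞) τ) (hσ : ContDiff ℝ (⊤:ℕ∞) σ)
    (hl : Function.LeftInverse σ τ) (hr : Function.RightInverse σ τ) (y : Euc d) :
    ∃ e : Euc d ≃L[ℝ] Euc d, (e : Euc d →L[ℝ] Euc d) = fderiv ℝ τ y := by
  have hBA : (fderiv ℝ σ (τ y)) ∘L (fderiv ℝ τ y) = ContinuousLinearMap.id ℝ (Euc d) := by
    have hcomp : fderiv ℝ (σ ∘ τ) y = (fderiv ℝ σ (τ y)).comp (fderiv ℝ τ y) :=
      fderiv_comp y (hσ.differentiable hone _) (hτ.differentiable hone _)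
    have hid : σ ∘ τ = _root_.id := funext hl
    rw [hid, fderiv_id] at hcomp
    exact hcomp.symm
  have hAB : (fderiv ℝ τ y) ∘L (fderiv ℝ σ (τ y)) = ContinuousLinearMap.id ℝ (Euc d) := by
    have hcomp : fderiv ℝ (τ ∘ σ) (τ y) = (fderiv ℝ τ (σ (τ y))).comp (fderiv ℝ σ (τ y)) :=
      fderiv_comp (τ y) (hτ.differentiable hone _) (hσ.differentiable hone _)
    have hid : τ ∘ σ = _root_.id := funext hr
    rw [hid, fderiv_id, hl y] at hcomp
    exact hcomp.symm
  refine ⟨ContinuousLinearEquiv.equivOfInverse (fderiv ℝ τ y) (fderiv ℝ σ (τ y))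
    (fun v => ?_) (fun v => ?_), rfl⟩
  · have := DFunLike.congr_fun hBA v
    simpa using this
  · have := DFunLike.congr_fun hAB v
    simpa using this

variable {p d : ℕ} {T : Euc p × Euc d → Euc d} {σ : Euc p → Euc d → Euc d}

lemma phi_deriv_equiv (hT : ContDiff ℝ (⊤:ℕ∞) T)
    (hσC : ∀ x, ContDiff ℝ (⊤:ℕ∞) (σ x))
    (hσl : ∀ x, Function.LeftInverse (σ x) (fun y => T (x, y)))
    (hσr : ∀ x, Function.RightInverse (σ x) (fun y => T (x, y)))
    (z : Euc p × Euc d) :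
    ∃ J : (Euc p × Euc d) ≃L[ℝ] Euc p × Euc d,
      (J : (Euc p × Euc d) →L[ℝ] Euc p × Euc d)
        = (ContinuousLinearMap.fst ℝ (Euc p) (Euc d)).prod (fderiv ℝ T z) := by
  obtain ⟨x, y⟩ := z
  have hTx : ContDiff ℝ (⊤:ℕ∞) (fun y' => T (x, y')) :=
    hT.comp (contDiff_const.prodMk contDiff_id)
  obtain ⟨e, he⟩ := fderiv_equiv hTx (hσC x) (hσl x) (hσr x) y
  have hP0 : HasFDerivAt (fun y' : Euc d => ((x, y') : Euc p × Euc d))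
      (ContinuousLinearMap.inr ℝ (Euc p) (Euc d)) y :=
    HasFDerivAt.prodMk (hasFDerivAt_const x y) (hasFDerivAt_id y)
  have hAeq : fderiv ℝ (fun y' => T (x, y')) y
      = (fderiv ℝ T (x, y)) ∘L ContinuousLinearMap.inr ℝ (Euc p) (Euc d) :=
    ((hT.differentiable hone (x, y)).hasFDerivAt.comp y hP0).fderiv
  set D := fderiv ℝ T (x, y) with hD
  have he' : ∀ v : Euc d, e v = D (0, v) := by
    intro v
    have h0 : e v = (fderiv ℝ (fun y' => T (x, y')) y) v := by
      rw [← he]; rfl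
    rw [h0, hAeq]
    simp
  set F := (ContinuousLinearMap.fst ℝ (Euc p) (Euc d)).prod D with hF
  set G := (ContinuousLinearMap.fst ℝ (Euc p) (Euc d)).prod
    ((e.symm : Euc d →L[ℝ] Euc d) ∘L
      ((ContinuousLinearMap.snd ℝ (Euc p) (Euc d)) -
        D ∘L ((ContinuousLinearMap.fst ℝ (Euc p) (Euc d)).prod
          (0 : (Euc p × Euc d) →L[ℝ] Euc d)))) with hG
  have hsplit : ∀ a b, D (a, b) = D (a, 0) + D (0, b) := by
    intro a b
    rw [← map_add]
    congr 1
    simp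
  refine ⟨ContinuousLinearEquiv.equivOfInverse F G (fun w => ?_) (fun w => ?_), rfl⟩
  · obtain ⟨a, b⟩ := w
    have h1 : F (a, b) = (a, D (a, b)) := by simp [hF]
    have h2 : G (a, D (a, b)) = (a, e.symm (D (a, b) - D (a, 0))) := by simp [hG]
    rw [h1, h2]
    have h3 : D (a, b) - D (a, 0) = D (0, b) := by rw [hsplit a b]; abel
    rw [h3, ← he' b, e.symm_apply_apply]
  · obtain ⟨a, b⟩ := w
    have h2 : G (a, b) = (a, e.symm (b - D (a, 0))) := by simp [hG]
    rw [h2]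
    have h1 : F (a, e.symm (b - D (a, 0))) = (a, D (a, e.symm (b - D (a, 0)))) := by simp [hF]
    rw [h1]
    rw [hsplit a (e.symm (b - D (a, 0))), ← he' (e.symm (b - D (a, 0))), e.apply_symm_apply]
    simp

lemma phi_inv_contDiff (hT : ContDiff ℝ (⊤:ℕ∞) T)
    (hσC : ∀ x, ContDiff ℝ (⊤:ℕ∞) (σ x))
    (hσl : ∀ x, Function.LeftInverse (σ x) (fun y => T (x, y)))
    (hσr : ∀ x, Function.RightInverse (σ x) (fun y => T (x, y))) :
    ContDiff ℝ (⊤:ℕ∞) (fun q : Euc p × Euc d => ((q.1, σ q.1 q.2) : Euc p × Euc d)) := by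
  set Φ : Euc p × Euc d → Euc p × Euc d := fun z => (z.1, T z) with hΦ
  have hΦC : ContDiff ℝ (⊤:ℕ∞) Φ := contDiff_fst.prodMk hT
  have hinj : Function.Injective Φ := by
    rintro ⟨a, b⟩ ⟨a', b'⟩ hEq
    have h1 : a = a' := congrArg Prod.fst hEq
    subst h1
    have h2 : T (a, b) = T (a, b') := congrArg Prod.snd hEq
    have h3 := congrArg (σ a) h2
    rw [hσl a b, hσl a b'] at h3
    exact Prod.ext rfl h3
  have hright : ∀ q : Euc p × Euc d, Φ (q.1, σ q.1 q.2) = q := by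
    intro q
    show (q.1, T (q.1, σ q.1 q.2)) = q
    rw [show T (q.1, σ q.1 q.2) = q.2 from hσr q.1 q.2]
  rw [contDiff_iff_contDiffAt]
  intro q₀
  set z₀ : Euc p × Euc d := (q₀.1, σ q₀.1 q₀.2) with hz₀
  have hq₀ : Φ z₀ = q₀ := hright q₀
  obtain ⟨J, hJ⟩ := phi_deriv_equiv hT hσC hσl hσr z₀
  have hFD : HasFDerivAt Φ (J : (Euc p × Euc d) →L[ℝ] Euc p × Euc d) z₀ := by
    rw [hJ]
    exact HasFDerivAt.prodMk hasFDerivAt_fst (hT.differentiable hone z₀).hasFDerivAt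
  have hstrict : HasStrictFDerivAt Φ (J : (Euc p × Euc d) →L[ℝ] Euc p × Euc d) z₀ :=
    hΦC.contDiffAt.hasStrictFDerivAt' hFD hone
  have hCDinv : ContDiffAt ℝ (⊤:ℕ∞) (hstrict.localInverse Φ J z₀) (Φ z₀) := by
    have h1 := hΦC.contDiffAt.to_localInverse (f' := J) hFD hone
    have h2 : hΦC.contDiffAt.localInverse (f' := J) hFD hone = hstrict.localInverse Φ J z₀ := rfl
    rwa [h2] at h1
  have hev : (fun q : Euc p × Euc d => ((q.1, σ q.1 q.2) : Euc p × Euc d))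
      =ᶠ[𝓝 q₀] hstrict.localInverse Φ J z₀ := by
    have h1 : ∀ᶠ y in 𝓝 (Φ z₀), Φ (hstrict.localInverse Φ J z₀ y) = y :=
      hstrict.eventually_right_inverse
    rw [hq₀] at h1
    filter_upwards [h1] with y hy
    apply hinj
    rw [hright y, hy]
  rw [hq₀] at hCDinv
  exact hCDinv.congr_of_eventuallyEq hev


end MBAux

/-- Composition with parameterized diffeomorphisms preserves
the parametric Morse-Bott property. -/
theorem diffeo_comp_preserves_morse_bott
    {p d : ℕ} (h : Euc d → ℝ) (hh : ContDiff ℝ (⊤ : ℕ∞) h) (hmb : IsMorseBott h)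
    (T : Euc p × Euc d → Euc d) (hT : ContDiff ℝ (⊤ : ℕ∞) T)
    (hdiffeo : ∀ x : Euc p, ∃ σ : Euc d → Euc d, ContDiff ℝ (⊤ : ℕ∞) σ ∧
      Function.LeftInverse σ (fun y => T (x, y)) ∧
      Function.RightInverse σ (fun y => T (x, y))) :
    IsParamMorseBott (fun z : Euc p × Euc d => h (T z)) := by
  classical
  choose σ hσC hσl hσr using hdiffeo
  intro z₀ hz₀
  have hTx : ∀ x, ContDiff ℝ (⊤:ℕ∞) (fun y => T (x, y)) :=
    fun x => hT.comp (contDiff_const.prodMk contDiff_id)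
  have hgradY : ∀ x y, gradY (fun z : Euc p × Euc d => h (T z)) x y
      = ContinuousLinearMap.adjoint (fderiv ℝ (fun y' => T (x, y')) y)
          (gradient h (T (x, y))) := by
    intro x y
    exact MBAux.gradient_comp (hh.differentiable MBAux.hone _)
      ((hTx x).differentiable MBAux.hone _)
  have hcrit : ∀ x y, gradY (fun z : Euc p × Euc d => h (T z)) x y = 0
      ↔ gradient h (T (x, y)) = 0 := by
    intro x y
    obtain ⟨e, he⟩ := MBAux.fderiv_equiv (hTx x) (hσC x) (hσl x) (hσr x) y
    rw [hgradY, ← he]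
    constructor
    · intro h0
      apply MBAux.adjoint_equiv_injective e
      rw [map_zero]
      exact h0
    · intro h0
      rw [h0, map_zero]
  have hw₀ : gradient h (T z₀) = 0 := (hcrit z₀.1 z₀.2).mp hz₀
  obtain ⟨V', hV'open, hw₀V', hconn', hsub'⟩ := hmb (T z₀) hw₀
  -- the map Φ and its global smooth inverse
  set Φ : Euc p × Euc d → Euc p × Euc d := fun z => (z.1, T z) with hΦdef
  have hΦC : ContDiff ℝ (⊤:ℕ∞) Φ := contDiff_fst.prodMk hT
  set Φinv : Euc p × Euc d → Euc p × Euc d := fun q => (q.1, σ q.1 q.2) with hΦinvdef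
  have hΦinvC : ContDiff ℝ (⊤:ℕ∞) Φinv := MBAux.phi_inv_contDiff hT hσC hσl hσr
  have hΦinvΦ : ∀ z, Φinv (Φ z) = z := by
    intro z
    show ((z.1, σ z.1 (T z)) : Euc p × Euc d) = z
    rw [show σ z.1 (T z) = z.2 from hσl z.1 z.2]
  have hΦΦinv : ∀ q, Φ (Φinv q) = q := by
    intro q
    show ((q.1, T (q.1, σ q.1 q.2)) : Euc p × Euc d) = q
    rw [show T (q.1, σ q.1 q.2) = q.2 from hσr q.1 q.2]
  set C' : Set (Euc d) := {y | grad1 h y = 0} ∩ V' with hC'def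
  set V : Set (Euc p × Euc d) := Φ ⁻¹' (univ ×ˢ V') with hVdef
  have hVopen : IsOpen V := (isOpen_univ.prod hV'open).preimage hΦC.continuous
  have hz₀V : z₀ ∈ V := by
    show Φ z₀ ∈ univ ×ˢ V'
    exact ⟨mem_univ _, hw₀V'⟩
  have hSet : augCrit (fun z : Euc p × Euc d => h (T z)) ∩ V = Φ ⁻¹' (univ ×ˢ C') := by
    ext z
    constructor
    · rintro ⟨h1, h2⟩
      have h1' : gradient h (T z) = 0 := (hcrit z.1 z.2).mp h1
      exact ⟨mem_univ _, h1', h2.2⟩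
    · rintro ⟨-, h1, h2⟩
      refine ⟨(hcrit z.1 z.2).mpr h1, mem_univ _, h2⟩
  have hconnS : IsConnected (augCrit (fun z : Euc p × Euc d => h (T z)) ∩ V) := by
    rw [hSet]
    have himg : Φ ⁻¹' (univ ×ˢ C') = Φinv '' (univ ×ˢ C') := by
      ext q
      constructor
      · intro hq
        exact ⟨Φ q, hq, hΦinvΦ q⟩
      · rintro ⟨r, hr, rfl⟩
        show Φ (Φinv r) ∈ univ ×ˢ C'
        rw [hΦΦinv r]
        exact hr
    rw [himg]
    exact (isConnected_univ.prod hconn').image _ hΦinvC.continuous.continuousOn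
  have hdim : Module.finrank ℝ
        (LinearMap.ker (hessYY (fun z : Euc p × Euc d => h (T z)) z₀.1 z₀.2 : Euc d →ₗ[ℝ] Euc d))
      = Module.finrank ℝ (LinearMap.ker (hess1 h (T z₀) : Euc d →ₗ[ℝ] Euc d)) := by
    obtain ⟨e, he⟩ := MBAux.fderiv_equiv (hTx z₀.1) (hσC z₀.1) (hσl z₀.1) (hσr z₀.1) z₀.2
    have heq : hessYY (fun z : Euc p × Euc d => h (T z)) z₀.1 z₀.2
        = (ContinuousLinearMap.adjoint (e : Euc d →L[ℝ] Euc d)) ∘L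
          ((hess1 h (T z₀)) ∘L (e : Euc d →L[ℝ] Euc d)) := by
      have hYY := MBAux.fderiv_gradient_comp hh (hTx z₀.1) z₀.2 hw₀
      rw [he]
      exact hYY
    rw [heq]
    exact MBAux.finrank_ker_conj _ e
  refine ⟨V, hVopen, hz₀V, hconnS, ?_⟩
  rw [hdim, hSet]
  intro z hz
  have hTz : T z ∈ C' := hz.2
  obtain ⟨W', U', Vt', ψ', ψinv', hdim', hU'open, hTzU', hVt'open, hψ'C, hψinv'C,
    hli', hri', him1', him2'⟩ := hsub' (T z) hTz
  -- the charts for the product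
  set ψ : Euc p × Euc d → Euc p × Euc d := fun q => (q.1, ψ' (T q)) with hψdef
  set ψinv : Euc p × Euc d → Euc p × Euc d := fun q => Φinv (q.1, ψinv' q.2) with hψinvdef
  set U : Set (Euc p × Euc d) := Φ ⁻¹' (univ ×ˢ U') with hUdef
  have hUopen : IsOpen U := (isOpen_univ.prod hU'open).preimage hΦC.continuous
  -- key pointwise identities
  have hleftinv : ∀ u, T u ∈ U' → ψinv (ψ u) = u := by
    intro u hu
    show Φinv (u.1, ψinv' (ψ' (T u))) = u
    rw [hli' (T u) hu]
    exact hΦinvΦ u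
  have hrightinv : ∀ v : Euc p × Euc d, v.2 ∈ Vt' → ψ (ψinv v) = v := by
    intro v hv
    have h1 : Φ (Φinv (v.1, ψinv' v.2)) = (v.1, ψinv' v.2) := hΦΦinv _
    have ha' := congrArg Prod.fst h1
    have hb' := congrArg Prod.snd h1
    have ha : (Φinv (v.1, ψinv' v.2)).1 = v.1 := ha'
    have hb : T (Φinv (v.1, ψinv' v.2)) = ψinv' v.2 := hb'
    show ((Φinv (v.1, ψinv' v.2)).1, ψ' (T (Φinv (v.1, ψinv' v.2)))) = v
    rw [ha, hb, hri' v.2 hv]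
  have hmemU : ∀ v : Euc p × Euc d, ψinv' v.2 ∈ U' → ψinv v ∈ U := by
    intro v hv
    show Φ (Φinv (v.1, ψinv' v.2)) ∈ univ ×ˢ U'
    rw [hΦΦinv]
    exact ⟨mem_univ _, hv⟩
  refine ⟨Submodule.prod ⊤ W', U, univ ×ˢ Vt', ψ, ψinv, ?_, hUopen, ?_, ?_, ?_, ?_, ?_, ?_, ?_, ?_⟩
  · rw [MBAux.finrank_prod_top W', hdim']
  · show Φ z ∈ univ ×ˢ U'
    exact ⟨mem_univ _, hTzU'⟩
  · exact isOpen_univ.prod hVt'open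
  · -- ContDiffOn ψ U
    have houter : ContDiffOn ℝ 2 (fun q : Euc p × Euc d => ((q.1, ψ' q.2) : Euc p × Euc d))
        (univ ×ˢ U') :=
      (contDiff_fst.contDiffOn).prodMk (hψ'C.comp contDiff_snd.contDiffOn fun q hq => hq.2)
    exact houter.comp ((hΦC.of_le MBAux.htwo).contDiffOn) fun q hq => hq
  · -- ContDiffOn ψinv (univ ×ˢ Vt')
    have hinner : ContDiffOn ℝ 2
        (fun q : Euc p × Euc d => ((q.1, ψinv' q.2) : Euc p × Euc d)) (univ ×ˢ Vt') :=
      (contDiff_fst.contDiffOn).prodMk (hψinv'C.comp contDiff_snd.contDiffOn fun q hq => hq.2)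
    exact (hΦinvC.of_le MBAux.htwo).comp_contDiffOn hinner
  · intro u hu
    exact hleftinv u hu.2
  · intro v hv
    exact hrightinv v hv.2
  · -- ψ '' U = univ ×ˢ Vt'
    apply Set.Subset.antisymm
    · rintro q ⟨u, hu, rfl⟩
      refine ⟨mem_univ _, ?_⟩
      show ψ' (T u) ∈ Vt'
      rw [← him1']
      exact mem_image_of_mem _ hu.2
    · intro v hv
      have hv2 : v.2 ∈ ψ' '' U' := by rw [him1']; exact hv.2
      obtain ⟨a, haU', ha2⟩ := hv2
      have hva : ψinv' v.2 = a := by rw [← ha2, hli' a haU']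
      exact ⟨ψinv v, hmemU v (hva ▸ haU'), hrightinv v hv.2⟩
  · -- ψ '' (U ∩ S) = (univ ×ˢ Vt') ∩ W
    apply Set.Subset.antisymm
    · rintro q ⟨u, ⟨huU, huS⟩, rfl⟩
      have hTu : T u ∈ U' ∩ C' := ⟨huU.2, huS.2⟩
      have h2 : ψ' (T u) ∈ Vt' ∩ (W' : Set (Euc d)) := by
        rw [← him2']
        exact mem_image_of_mem _ hTu
      refine ⟨⟨mem_univ _, h2.1⟩, ?_⟩
      show (u.1, ψ' (T u)) ∈ Submodule.prod ⊤ W'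
      exact ⟨trivial, h2.2⟩
    · rintro v ⟨hvVt, hvW⟩
      have hvW2 : v.2 ∈ (W' : Set (Euc d)) := (Submodule.mem_prod.mp hvW).2
      have hv2 : v.2 ∈ ψ' '' (U' ∩ C') := by rw [him2']; exact ⟨hvVt.2, hvW2⟩
      obtain ⟨a, haMem, ha2⟩ := hv2
      have hva : ψinv' v.2 = a := by rw [← ha2, hli' a haMem.1]
      refine ⟨ψinv v, ⟨hmemU v (hva ▸ haMem.1), ?_⟩, hrightinv v hvVt.2⟩
      show Φ (ψinv v) ∈ univ ×ˢ C'
      show Φ (Φinv (v.1, ψinv' v.2)) ∈ univ ×ˢ C'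
      rw [hΦΦinv]
      exact ⟨mem_univ _, hva ▸ haMem.2⟩

end
end

section
/- Fixed points of preconditioned gradient descent compositions are critical points: Let g : ℝ^p × ℝ^d → ℝ be twice continuously differentiable with y ↦ ∂_y g(x,y) L-Lipschitz for every x. Define recursively φ_{T+1}(x,y) = φ_T(x,y) − H_T(x,y)·∂_y g(x, φ_T(x,y)) with φ_0(x,y) = y, and I_{M+1}(x,y) = I_M(x,y) − H'_M(x,y)·∂_y g(x, I_M(x,y)) with I_0(x,y) = y, where each H_T(x,y) and H'_M(x,y) is a symmetric positive-definite matrix satisfying H_T(x,y) ⪯ (1/L)I and H'_M(x,y) ⪯ (1/L)I for all (x,y). Let T, M be non-negative integers with T + M > 0 and suppose (x,y) ∈ ℝ^p × ℝ^d satisfies φ_T(x, I_M(x,y)) = y. Then ∂_y g(x,y) = 0. -/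
noncomputable section

open Set Filter Topology Metric RealInnerProductSpace

variable {p d : ℕ}

lemma gradY_hasGradientAt (g : Euc p × Euc d → ℝ) (hg : ContDiff ℝ 2 g) (x : Euc p) (y : Euc d) :
    HasGradientAt (fun y' => g (x, y')) (gradY g x y) y := by
  have hD : Differentiable ℝ g := hg.differentiable (by norm_num)
  have : DifferentiableAt ℝ (fun y' : Euc d => g (x, y')) y :=
    (hD.comp ((differentiable_const x).prodMk differentiable_id)).differentiableAt
  exact this.hasGradientAt

lemma descent (g : Euc p × Euc d → ℝ) (hg : ContDiff ℝ 2 g) (L : ℝ) (hL : 0 < L)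
    (hLip : ∀ x : Euc p, LipschitzWith (Real.toNNReal L) (fun y => gradY g x y))
    (x : Euc p) (y h : Euc d) :
    g (x, y + h) ≤ g (x, y) + ⟪gradY g x y, h⟫ + L / 2 * ‖h‖ ^ 2 := by
  set u := gradY g x y with hu
  set G : ℝ → ℝ := fun t => g (x, y + t • h) - t * ⟪u, h⟫ - L / 2 * ‖h‖ ^ 2 * t ^ 2 with hG
  have hc : ∀ t : ℝ, HasDerivAt (fun s : ℝ => y + s • h) h t := by
    intro t
    simpa using ((hasDerivAt_id t).smul_const h).const_add y
  have hGd : ∀ t : ℝ, HasDerivAt G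
      (⟪gradY g x (y + t • h), h⟫ - ⟪u, h⟫ - L / 2 * ‖h‖ ^ 2 * (2 * t)) t := by
    intro t
    have h1 : HasDerivAt (fun s : ℝ => g (x, y + s • h)) ⟪gradY g x (y + t • h), h⟫ t := by
      have := ((gradY_hasGradientAt g hg x (y + t • h)).hasFDerivAt).comp_hasDerivAt t (hc t)
      simpa [Function.comp_def] using this
    have h2 : HasDerivAt (fun s : ℝ => s * ⟪u, h⟫) ⟪u, h⟫ t := by
      simpa using (hasDerivAt_id t).mul_const (⟪u, h⟫ : ℝ)
    have h3 : HasDerivAt (fun s : ℝ => L / 2 * ‖h‖ ^ 2 * s ^ 2) (L / 2 * ‖h‖ ^ 2 * (2 * t)) t := by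
      simpa [mul_comm, mul_assoc] using ((hasDerivAt_pow 2 t).const_mul (L / 2 * ‖h‖ ^ 2))
    exact (h1.sub h2).sub h3
  have key : AntitoneOn G (Icc (0:ℝ) 1) := by
    apply antitoneOn_of_deriv_nonpos (convex_Icc 0 1)
    · exact fun t _ => ((hGd t).continuousAt).continuousWithinAt
    · exact fun t _ => ((hGd t).differentiableAt).differentiableWithinAt
    · intro t ht
      rw [interior_Icc] at ht
      rw [(hGd t).deriv]
      have hb : ⟪gradY g x (y + t • h) - u, h⟫ ≤ L * t * ‖h‖ ^ 2 := by
        calc ⟪gradY g x (y + t • h) - u, h⟫ ≤ ‖gradY g x (y + t • h) - u‖ * ‖h‖ :=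
              real_inner_le_norm _ _
          _ ≤ L * t * ‖h‖ ^ 2 := by
              have hd := (hLip x).dist_le_mul (y + t • h) y
              rw [Real.coe_toNNReal L hL.le] at hd
              have : dist (gradY g x (y + t • h)) (gradY g x y) ≤ L * (t * ‖h‖) := by
                simpa [dist_eq_norm, norm_smul, abs_of_pos ht.1] using hd
              have hn : ‖gradY g x (y + t • h) - u‖ ≤ L * (t * ‖h‖) := by
                simpa [hu, dist_eq_norm] using this
              have hh : (0:ℝ) ≤ ‖h‖ := norm_nonneg _
              nlinarith [norm_nonneg (gradY g x (y + t • h) - u)]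
      have hsplit : ⟪gradY g x (y + t • h), h⟫ - ⟪u, h⟫ = ⟪gradY g x (y + t • h) - u, h⟫ := by
        rw [inner_sub_left]
      nlinarith [ht.1]
  have h01 : G 1 ≤ G 0 := key (by norm_num) (by norm_num) (by norm_num)
  simp only [hG, one_smul, zero_smul, add_zero, one_mul, one_pow, zero_mul, zero_pow,
    mul_zero, sub_zero] at h01
  linarith

lemma step_descent (g : Euc p × Euc d → ℝ) (hg : ContDiff ℝ 2 g) (L : ℝ) (hL : 0 < L)
    (hLip : ∀ x : Euc p, LipschitzWith (Real.toNNReal L) (fun y => gradY g x y))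
    (x : Euc p) (A : Euc d →L[ℝ] Euc d)
    (hsym : ContinuousLinearMap.adjoint A = A)
    (hpos : ∀ w : Euc d, w ≠ 0 → 0 < ⟪w, A w⟫)
    (hle : ∀ w : Euc d, ⟪w, A w⟫ ≤ (1 / L) * ‖w‖ ^ 2)
    (y : Euc d) :
    g (x, y - A (gradY g x y)) ≤ g (x, y) - 1 / 2 * ⟪gradY g x y, A (gradY g x y)⟫ := by
  set u := gradY g x y with hu
  have hpsd : ∀ w : Euc d, 0 ≤ ⟪w, A w⟫ := by
    intro w
    by_cases hw : w = 0
    · simp [hw]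
    · exact (hpos w hw).le
  have hAsq : ‖A u‖ ^ 2 ≤ (1 / L) * ⟪u, A u⟫ := by
    by_cases hAu : A u = 0
    · rw [hAu]
      simp
    · have hsymm : ⟪u, A (A u)⟫ = ⟪A u, A u⟫ := by
        have h := ContinuousLinearMap.adjoint_inner_right A u (A u)
        rw [hsym] at h
        exact h
      set b : ℝ := ⟪u, A u⟫ with hbdef
      set c : ℝ := ⟪A u, A (A u)⟫ with hcdef
      set s : ℝ := ‖A u‖ ^ 2 with hsdef
      have hc : 0 < c := hpos (A u) hAu
      have hb : 0 ≤ b := hpsd u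
      set t : ℝ := -s / c with ht
      have hq : 0 ≤ ⟪u + t • A u, A (u + t • A u)⟫ := hpsd _
      have hexp : ⟪u + t • A u, A (u + t • A u)⟫ = b + 2 * t * s + t ^ 2 * c := by
        simp only [map_add, map_smul, inner_add_left, inner_add_right,
          real_inner_smul_left, real_inner_smul_right, hsymm, ← hbdef, ← hcdef]
        rw [real_inner_self_eq_norm_sq, ← hsdef]
        ring
      rw [hexp, ht] at hq
      have hAun : 0 < s := by rw [hsdef]; exact pow_pos (norm_pos_iff.mpr hAu) 2
      have hkey : s * s ≤ b * c := by
        have hc' : c ≠ 0 := ne_of_gt hc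
        have he : b + 2 * (-s / c) * s + (-s / c) ^ 2 * c = b - s * s / c := by
          field_simp
          ring
        rw [he] at hq
        exact (div_le_iff₀ hc).mp (by linarith)
      have hcle : c ≤ (1 / L) * s := hle (A u)
      nlinarith
  have hdes := descent g hg L hL hLip x y (-(A u))
  have h1 : ⟪u, -(A u)⟫ = -⟪u, A u⟫ := by rw [inner_neg_right]
  have h2 : ‖-(A u)‖ = ‖A u‖ := norm_neg _
  rw [h1, h2] at hdes
  have h3 : y + -(A u) = y - A u := by abel
  rw [h3] at hdes
  have h4 : L / 2 * ‖A u‖ ^ 2 ≤ 1 / 2 * ⟪u, A u⟫ := by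
    have := mul_le_mul_of_nonneg_left hAsq (by positivity : (0:ℝ) ≤ L / 2)
    calc L / 2 * ‖A u‖ ^ 2 ≤ L / 2 * ((1 / L) * ⟪u, A u⟫) := this
      _ = 1 / 2 * ⟪u, A u⟫ := by
          rw [div_mul_eq_mul_div, div_mul_eq_mul_div, mul_comm]
          field_simp
  linarith


/-- Fixed points of preconditioned gradient descent compositions
are critical points. -/
theorem fixed_point_of_unrolled_descent_is_critical
    {p d : ℕ} (g : Euc p × Euc d → ℝ) (hg : ContDiff ℝ 2 g)
    (L : ℝ) (hL : 0 < L)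
    (hLip : ∀ x : Euc p, LipschitzWith (Real.toNNReal L) (fun y => gradY g x y))
    (H H' : ℕ → Euc p → Euc d → (Euc d →L[ℝ] Euc d))
    (hHsym : ∀ T x y, ContinuousLinearMap.adjoint (H T x y) = H T x y)
    (hH'sym : ∀ M x y, ContinuousLinearMap.adjoint (H' M x y) = H' M x y)
    (hHpos : ∀ T x y, ∀ w : Euc d, w ≠ 0 → 0 < ⟪w, H T x y w⟫)
    (hH'pos : ∀ M x y, ∀ w : Euc d, w ≠ 0 → 0 < ⟪w, H' M x y w⟫)
    (hHle : ∀ T x y, ∀ w : Euc d, ⟪w, H T x y w⟫ ≤ (1 / L) * ‖w‖ ^ 2)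
    (hH'le : ∀ M x y, ∀ w : Euc d, ⟪w, H' M x y w⟫ ≤ (1 / L) * ‖w‖ ^ 2)
    (φ I : ℕ → Euc p → Euc d → Euc d)
    (hφ0 : ∀ x y, φ 0 x y = y)
    (hφS : ∀ T x y, φ (T + 1) x y = φ T x y - H T x y (gradY g x (φ T x y)))
    (hI0 : ∀ x y, I 0 x y = y)
    (hIS : ∀ M x y, I (M + 1) x y = I M x y - H' M x y (gradY g x (I M x y)))
    (T M : ℕ) (hTM : 0 < T + M)
    (x : Euc p) (y : Euc d) (hfix : φ T x (I M x y) = y) :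
    gradY g x y = 0 := by
  have hpsdH : ∀ (k : ℕ) (x' : Euc p) (y' w : Euc d), 0 ≤ ⟪w, H k x' y' w⟫ := by
    intro k x' y' w
    by_cases hw : w = 0
    · simp [hw]
    · exact (hHpos k x' y' w hw).le
  have hpsdH' : ∀ (k : ℕ) (x' : Euc p) (y' w : Euc d), 0 ≤ ⟪w, H' k x' y' w⟫ := by
    intro k x' y' w
    by_cases hw : w = 0
    · simp [hw]
    · exact (hH'pos k x' y' w hw).le
  have hφstep : ∀ (k : ℕ) (w : Euc d), g (x, φ (k+1) x w) ≤
      g (x, φ k x w) - 1 / 2 * ⟪gradY g x (φ k x w), H k x w (gradY g x (φ k x w))⟫ := by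
    intro k w
    rw [hφS k x w]
    exact step_descent g hg L hL hLip x (H k x w) (hHsym k x w) (hHpos k x w) (hHle k x w) _
  have hIstep : ∀ (k : ℕ), g (x, I (k+1) x y) ≤
      g (x, I k x y) - 1 / 2 * ⟪gradY g x (I k x y), H' k x y (gradY g x (I k x y))⟫ := by
    intro k
    rw [hIS k x y]
    exact step_descent g hg L hL hLip x (H' k x y) (hH'sym k x y) (hH'pos k x y) (hH'le k x y) _
  have hφmono : ∀ w : Euc d, Antitone (fun n => g (x, φ n x w)) := by
    intro w
    apply antitone_nat_of_succ_le
    intro n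
    have h1 := hφstep n w
    have h2 := hpsdH n x w (gradY g x (φ n x w))
    linarith
  have hImono : Antitone (fun n => g (x, I n x y)) := by
    apply antitone_nat_of_succ_le
    intro n
    have h1 := hIstep n
    have h2 := hpsdH' n x y (gradY g x (I n x y))
    linarith
  by_contra hne
  rcases Nat.eq_zero_or_pos M with hM | hM
  · have hT : 1 ≤ T := by omega
    have hwy : I M x y = y := by rw [hM, hI0]
    rw [hwy] at hfix
    have h1 := hφstep 0 y
    rw [hφ0] at h1
    have h2 : g (x, φ T x y) ≤ g (x, φ 1 x y) := hφmono y hT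
    rw [hfix] at h2
    have h3 := hHpos 0 x y (gradY g x y) hne
    linarith
  · have h1 := hIstep 0
    rw [hI0] at h1
    have h2 : g (x, I M x y) ≤ g (x, I 1 x y) := hImono hM
    have h3 : g (x, φ T x (I M x y)) ≤ g (x, φ 0 x (I M x y)) := hφmono _ (Nat.zero_le T)
    rw [hfix, hφ0] at h3
    have h4 := hH'pos 0 x y (gradY g x y) hne
    linarith


end
end

section
/- Gradient structure of unrolled preconditioned gradient descent at critical points: Let g : ℝ^p × ℝ^d → ℝ be twice continuously differentiable with y ↦ ∂_y g(x,y) L-Lipschitz for every x. Define recursively φ_{T+1}(x,y) = φ_T(x,y) − H_T(x,y)·∂_y g(x, φ_T(x,y)) with φ_0(x,y) = y, where each H_T(x,y) is a symmetric positive-definite matrix-valued map that is continuously differentiable in (x,y) and satisfies H_T(x,y) ⪯ (1/L)I. Then for every (x,y) with ∂_y g(x,y) = 0 and every T ≥ 0, it holds that φ_T(x,y) = y, and there exists a matrix D_T such that ∂_x φ_T(x,y) = ∂²_{xy} g(x,y) · D_T and ∂_y φ_T(x,y) = I + ∂²_{yy} g(x,y) · D_T. -/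
noncomputable section

open Set Filter Topology Metric RealInnerProductSpace

variable {p d : ℕ}

/-- Gradient structure of unrolled preconditioned gradient descent
at critical points. -/
theorem unrolled_descent_gradient_structure
    {p d : ℕ} (g : Euc p × Euc d → ℝ) (hg : ContDiff ℝ 2 g)
    (L : ℝ) (hL : 0 < L)
    (hLip : ∀ x : Euc p, LipschitzWith (Real.toNNReal L) (fun y => gradY g x y))
    (H : ℕ → Euc p → Euc d → (Euc d →L[ℝ] Euc d))
    (hHsym : ∀ T x y, ContinuousLinearMap.adjoint (H T x y) = H T x y)
    (hHpos : ∀ T x y, ∀ w : Euc d, w ≠ 0 → 0 < ⟪w, H T x y w⟫)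
    (hHle : ∀ T x y, ∀ w : Euc d, ⟪w, H T x y w⟫ ≤ (1 / L) * ‖w‖ ^ 2)
    (hHdiff : ∀ T : ℕ, ContDiff ℝ 1 (fun q : Euc p × Euc d => H T q.1 q.2))
    (φ : ℕ → Euc p → Euc d → Euc d)
    (hφ0 : ∀ x y, φ 0 x y = y)
    (hφS : ∀ T x y, φ (T + 1) x y = φ T x y - H T x y (gradY g x (φ T x y))) :
    ∀ (x : Euc p) (y : Euc d), gradY g x y = 0 → ∀ T : ℕ,
      φ T x y = y ∧
      ∃ D : Euc d →L[ℝ] Euc d,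
        fderiv ℝ (fun x' => φ T x' y) x = D ∘L hessXY g x y ∧
        fderiv ℝ (fun y' => φ T x y') y =
          ContinuousLinearMap.id ℝ (Euc d) + D ∘L hessYY g x y := by
  classical
  intro x y hcrit
  -- joint gradient map is C¹
  have hGkey : ∀ q : Euc p × Euc d, gradY g q.1 q.2 =
      (InnerProductSpace.toDual ℝ (Euc d)).symm
        ((fderiv ℝ g q).comp (ContinuousLinearMap.inr ℝ (Euc p) (Euc d))) := by
    intro q
    have hdiff : DifferentiableAt ℝ g q := (hg.differentiable (by norm_num)) q
    have hpair : HasFDerivAt (fun y' : Euc d => ((q.1, y') : Euc p × Euc d))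
        (ContinuousLinearMap.inr ℝ (Euc p) (Euc d)) q.2 := by
      have h := HasFDerivAt.prodMk (hasFDerivAt_const q.1 q.2 :
        HasFDerivAt (fun _ : Euc d => q.1) (0 : Euc d →L[ℝ] Euc p) q.2)
        (hasFDerivAt_id q.2)
      exact h.congr_fderiv (ContinuousLinearMap.ext fun v => by simp)
    have hcomp : HasFDerivAt (fun y' => g (q.1, y'))
        ((fderiv ℝ g q).comp (ContinuousLinearMap.inr ℝ (Euc p) (Euc d))) q.2 := by
      have h := hdiff.hasFDerivAt.comp q.2 hpair
      exact h
    rw [gradY, gradient, hcomp.fderiv]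
  have hGsmooth : ContDiff ℝ 1 (fun q : Euc p × Euc d => gradY g q.1 q.2) := by
    have h1 : ContDiff ℝ 1 (fun q : Euc p × Euc d => fderiv ℝ g q) :=
      hg.fderiv_right (by norm_num)
    have h2 : ContDiff ℝ 1 (fun q : Euc p × Euc d =>
        (InnerProductSpace.toDual ℝ (Euc d)).symm
          ((fderiv ℝ g q).comp (ContinuousLinearMap.inr ℝ (Euc p) (Euc d)))) := by
      have hcompL : ContDiff ℝ 1 (fun q : Euc p × Euc d =>
          (fderiv ℝ g q).comp (ContinuousLinearMap.inr ℝ (Euc p) (Euc d))) :=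
        (((ContinuousLinearMap.compL ℝ (Euc d) (Euc p × Euc d) ℝ).flip
          (ContinuousLinearMap.inr ℝ (Euc p) (Euc d))).contDiff).comp h1
      exact (InnerProductSpace.toDual ℝ (Euc d)).symm.contDiff.comp hcompL
    have heq : (fun q : Euc p × Euc d => gradY g q.1 q.2) = fun q =>
        (InnerProductSpace.toDual ℝ (Euc d)).symm
          ((fderiv ℝ g q).comp (ContinuousLinearMap.inr ℝ (Euc p) (Euc d))) :=
      funext hGkey
    rw [heq]; exact h2
  -- φ T is jointly C¹
  have hΦ : ∀ T : ℕ, ContDiff ℝ 1 (fun q : Euc p × Euc d => φ T q.1 q.2) := by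
    intro T
    induction T with
    | zero =>
        have : (fun q : Euc p × Euc d => φ 0 q.1 q.2) = fun q => q.2 :=
          funext fun q => hφ0 q.1 q.2
        rw [this]; exact contDiff_snd
    | succ T ih =>
        have heq : (fun q : Euc p × Euc d => φ (T + 1) q.1 q.2) = fun q =>
            φ T q.1 q.2 - H T q.1 q.2 (gradY g q.1 (φ T q.1 q.2)) :=
          funext fun q => hφS T q.1 q.2
        rw [heq]
        exact ih.sub ((hHdiff T).clm_apply (hGsmooth.comp (contDiff_fst.prodMk ih)))
  -- derivative of joint gradient at (x, y)
  set DG : Euc p × Euc d →L[ℝ] Euc d :=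
    fderiv ℝ (fun q : Euc p × Euc d => gradY g q.1 q.2) (x, y) with hDGdef
  have hDG : HasFDerivAt (fun q : Euc p × Euc d => gradY g q.1 q.2) DG (x, y) :=
    ((hGsmooth.differentiable one_ne_zero) (x, y)).hasFDerivAt
  have hBxy : hessXY g x y = DG.comp (ContinuousLinearMap.inl ℝ (Euc p) (Euc d)) := by
    have hpair : HasFDerivAt (fun x' : Euc p => ((x', y) : Euc p × Euc d))
        (ContinuousLinearMap.inl ℝ (Euc p) (Euc d)) x := by
      have h := (hasFDerivAt_id x).prodMk (hasFDerivAt_const y x :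
        HasFDerivAt (fun _ : Euc p => y) (0 : Euc p →L[ℝ] Euc d) x)
      exact h.congr_fderiv (ContinuousLinearMap.ext fun v => by simp)
    have h := hDG.comp x hpair
    exact h.fderiv
  have hByy : hessYY g x y = DG.comp (ContinuousLinearMap.inr ℝ (Euc p) (Euc d)) := by
    have hpair : HasFDerivAt (fun y' : Euc d => ((x, y') : Euc p × Euc d))
        (ContinuousLinearMap.inr ℝ (Euc p) (Euc d)) y := by
      have h := HasFDerivAt.prodMk (hasFDerivAt_const x y :
        HasFDerivAt (fun _ : Euc d => x) (0 : Euc d →L[ℝ] Euc p) y) (hasFDerivAt_id y)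
      exact h.congr_fderiv (ContinuousLinearMap.ext fun v => by simp)
    have h := hDG.comp y hpair
    exact h.fderiv
  have hDGw : ∀ (w : Euc p) (v : Euc d), DG (w, v) = hessXY g x y w + hessYY g x y v := by
    intro w v
    have : ((w, v) : Euc p × Euc d) = (w, 0) + (0, v) := by simp
    rw [this, map_add, hBxy, hByy]
    rfl
  -- main induction with HasFDerivAt
  have main : ∀ T : ℕ, φ T x y = y ∧
      ∃ D : Euc d →L[ℝ] Euc d,
        HasFDerivAt (fun x' => φ T x' y) (D ∘L hessXY g x y) x ∧
        HasFDerivAt (fun y' => φ T x y')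
          (ContinuousLinearMap.id ℝ (Euc d) + D ∘L hessYY g x y) y := by
    intro T
    induction T with
    | zero =>
        refine ⟨hφ0 x y, 0, ?_, ?_⟩
        · have heq : (fun x' => φ 0 x' y) = fun _ => y := funext fun x' => hφ0 x' y
          rw [heq, ContinuousLinearMap.zero_comp]
          exact hasFDerivAt_const y x
        · have heq : (fun y' => φ 0 x y') = fun y' => y' := funext fun y' => hφ0 x y'
          rw [heq, ContinuousLinearMap.zero_comp, add_zero]
          exact hasFDerivAt_id y
    | succ T ih =>
        obtain ⟨hfix, D, hA, hB⟩ := ih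
        have hfixpt : ((x, φ T x y) : Euc p × Euc d) = (x, y) := by rw [hfix]
        have hG0 : gradY g x (φ T x y) = 0 := by rw [hfix]; exact hcrit
        refine ⟨?_, D - H T x y ∘L (ContinuousLinearMap.id ℝ (Euc d) +
          hessYY g x y ∘L D), ?_, ?_⟩
        · rw [hφS, hfix, hcrit, map_zero, sub_zero]
        · -- x-derivative
          have heq : (fun x' => φ (T + 1) x' y) =
              fun x' => φ T x' y - H T x' y (gradY g x' (φ T x' y)) :=
            funext fun x' => hφS T x' y
          rw [heq]
          have hpair : HasFDerivAt (fun x' : Euc p => ((x', φ T x' y) : Euc p × Euc d))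
              ((ContinuousLinearMap.id ℝ (Euc p)).prod (D ∘L hessXY g x y)) x :=
            (hasFDerivAt_id x).prodMk hA
          have hDG' : HasFDerivAt (fun q : Euc p × Euc d => gradY g q.1 q.2) DG
              (x, φ T x y) := by rw [hfixpt]; exact hDG
          have hcomp : HasFDerivAt (fun x' => gradY g x' (φ T x' y))
              (DG ∘L (ContinuousLinearMap.id ℝ (Euc p)).prod (D ∘L hessXY g x y)) x := by
            have h := hDG'.comp x hpair
            exact h
          have hHd : HasFDerivAt (fun x' => H T x' y)
              (fderiv ℝ (fun x' => H T x' y) x) x := by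
            have h1 : DifferentiableAt ℝ (fun q : Euc p × Euc d => H T q.1 q.2) (x, y) :=
              ((hHdiff T).differentiable one_ne_zero) (x, y)
            have h2 : DifferentiableAt ℝ (fun x' : Euc p => ((x', y) : Euc p × Euc d)) x :=
              differentiableAt_id.prodMk (differentiableAt_const y)
            exact (DifferentiableAt.comp x h1 h2).hasFDerivAt
          have hclm := hHd.clm_apply hcomp
          have hAll := hA.sub hclm
          refine hAll.congr_fderiv ?_
          symm
          rw [hG0, map_zero, add_zero]
          refine ContinuousLinearMap.ext fun w => ?_
          simp only [ContinuousLinearMap.comp_apply, ContinuousLinearMap.sub_apply,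
            ContinuousLinearMap.add_apply, ContinuousLinearMap.coe_id', id_eq,
            ContinuousLinearMap.prod_apply, ContinuousLinearMap.coe_sub',
            Pi.sub_apply, ContinuousLinearMap.id_apply]
          rw [hDGw]
          all_goals simp [map_add]
          all_goals abel
        · -- y-derivative
          have heq : (fun y' => φ (T + 1) x y') =
              fun y' => φ T x y' - H T x y' (gradY g x (φ T x y')) :=
            funext fun y' => hφS T x y'
          rw [heq]
          have hpair : HasFDerivAt (fun y' : Euc d => ((x, φ T x y') : Euc p × Euc d))
              ((0 : Euc d →L[ℝ] Euc p).prod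
                (ContinuousLinearMap.id ℝ (Euc d) + D ∘L hessYY g x y)) y :=
            HasFDerivAt.prodMk (hasFDerivAt_const x y) hB
          have hDG' : HasFDerivAt (fun q : Euc p × Euc d => gradY g q.1 q.2) DG
              (x, φ T x y) := by rw [hfixpt]; exact hDG
          have hcomp : HasFDerivAt (fun y' => gradY g x (φ T x y'))
              (DG ∘L (0 : Euc d →L[ℝ] Euc p).prod
                (ContinuousLinearMap.id ℝ (Euc d) + D ∘L hessYY g x y)) y := by
            have h := hDG'.comp y hpair
            exact h
          have hHd : HasFDerivAt (fun y' => H T x y')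
              (fderiv ℝ (fun y' => H T x y') y) y := by
            have h1 : DifferentiableAt ℝ (fun q : Euc p × Euc d => H T q.1 q.2) (x, y) :=
              ((hHdiff T).differentiable one_ne_zero) (x, y)
            have h2 : DifferentiableAt ℝ (fun y' : Euc d => ((x, y') : Euc p × Euc d)) y :=
              (differentiableAt_const x).prodMk differentiableAt_id
            exact (DifferentiableAt.comp y h1 h2).hasFDerivAt
          have hclm := hHd.clm_apply hcomp
          have hAll := hB.sub hclm
          refine hAll.congr_fderiv ?_
          symm
          rw [hG0, map_zero, add_zero]
          refine ContinuousLinearMap.ext fun v => ?_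
          simp only [ContinuousLinearMap.comp_apply, ContinuousLinearMap.sub_apply,
            ContinuousLinearMap.add_apply, ContinuousLinearMap.coe_id', id_eq,
            ContinuousLinearMap.prod_apply, ContinuousLinearMap.coe_sub',
            Pi.sub_apply, ContinuousLinearMap.id_apply]
          rw [hDGw]
          all_goals simp [map_add]
          all_goals abel
  intro T
  obtain ⟨h1, D, h2, h3⟩ := main T
  exact ⟨h1, D, h2.fderiv, h3.fderiv⟩

end
end
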